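/- There exists η₁ > 0 such that for every fluid model (y, x) and Lebesgue-almost every t ≥ 0 with x(t) > -λ/β, the function s ↦ ‖(y(s), x(s))‖_* is differentiable at t and its derivative at t is at most -η₁ · ‖(y(t), x(t))‖_*. -/

import Mathlib

noncomputable def nu1 (β γ ε : ℝ) : ℝ := (γ * β - Real.sqrt (γ^2 * β^2 - 4 * ε * β)) / 2
noncomputable def nu2 (β γ ε : ℝ) : ℝ := (γ * β + Real.sqrt (γ^2 * β^2 - 4 * ε * β)) / 2

/-- The norm `‖u‖_*`: the Euclidean norm of the coordinates of `u` in the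
eigenvector basis `v₁ = (β/ν₁, -1)`, `v₂ = (β/ν₂, -1)`. -/
noncomputable def starNorm (β γ ε : ℝ) (u : ℝ × ℝ) : ℝ :=
  let a1 := β / nu1 β γ ε
  let a2 := β / nu2 β γ ε
  let α1 := (u.1 + a2 * u.2) / (a1 - a2)
  let α2 := -u.2 - α1
  Real.sqrt (α1 ^ 2 + α2 ^ 2)
open MeasureTheory Set Filter

open Topology

/-- A fluid model: locally Lipschitz pair `(y, x)` on `[0,∞)` with `x ≥ -λ/β`,
satisfying the fluid ODE a.e. on `[0,∞)`. -/
def IsFluidModel (β γ ε lam : ℝ) (y x : ℝ → ℝ) : Prop :=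
  (∀ T : ℝ, 0 < T → ∃ K : NNReal,
      LipschitzOnWith K y (Set.Icc 0 T) ∧ LipschitzOnWith K x (Set.Icc 0 T)) ∧
  (∀ t : ℝ, 0 ≤ t → -lam / β ≤ x t) ∧
  (∀ᵐ t ∂(volume.restrict (Set.Ici (0 : ℝ))),
    ∃ y' x' : ℝ, HasDerivAt y y' t ∧ HasDerivAt x x' t ∧
      (-lam / β < x t → y' = β * x t ∧ x' = -(γ * β * x t) - ε * y t) ∧
      (x t = -lam / β → y' = -lam ∧ x' = max (γ * lam - ε * y t) 0))

private lemma sq_norm_decay (a b n1 n2 s : ℝ) (hs : 0 < s) (hsq : s ^ 2 = a ^ 2 + b ^ 2)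
    (h12 : n1 ≤ n2) :
    2 * a * (-n1 * a) + 2 * b * (-n2 * b) ≤ -n1 * s * (2 * s) := by
  have h1 : 0 ≤ (n2 - n1) * b ^ 2 := mul_nonneg (sub_nonneg.2 h12) (sq_nonneg b)
  have h2 : -n1 * s * (2 * s) = -2 * n1 * (a ^ 2 + b ^ 2) := by
    rw [show -n1 * s * (2 * s) = -2 * n1 * s ^ 2 by ring, hsq]
  rw [h2]; nlinarith [h1]

/-- Lemma 4.2(i): away from the boundary, the `‖·‖_*`-norm of a
fluid model decreases at rate proportional to itself. -/
theorem stmt_2 (β γ ε lam : ℝ) (hβ : 0 < β) (hγ : 0 < γ) (hε : 0 < ε)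
    (hεbound : ε < γ ^ 2 * β / 4) (hlam : 0 < lam) :
    ∃ η₁ : ℝ, 0 < η₁ ∧
      ∀ y x : ℝ → ℝ, IsFluidModel β γ ε lam y x →
        ∀ᵐ t ∂(volume.restrict (Set.Ici (0 : ℝ))),
          -lam / β < x t →
            ∃ d : ℝ, HasDerivAt (fun s => starNorm β γ ε (y s, x s)) d t ∧
              d ≤ -η₁ * starNorm β γ ε (y t, x t) := by
  have hD : 0 < γ^2 * β^2 - 4 * ε * β := by nlinarith
  set S : ℝ := Real.sqrt (γ^2 * β^2 - 4 * ε * β) with hSdef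
  have hSpos : 0 < S := Real.sqrt_pos.2 hD
  have hS2 : S ^ 2 = γ^2 * β^2 - 4 * ε * β := Real.sq_sqrt hD.le
  have hSlt : S < γ * β := by
    have h1 : S < Real.sqrt (γ^2 * β^2) := by
      apply Real.sqrt_lt_sqrt hD.le
      nlinarith
    have h2 : Real.sqrt (γ^2 * β^2) = γ * β := by
      rw [show γ^2 * β^2 = (γ*β)^2 by ring, Real.sqrt_sq (by positivity)]
    linarith [h1.trans_eq h2]
  set ν1 : ℝ := nu1 β γ ε with hν1def
  set ν2 : ℝ := nu2 β γ ε with hν2def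
  have hν1 : ν1 = (γ * β - S) / 2 := rfl
  have hν2 : ν2 = (γ * β + S) / 2 := rfl
  have hν1pos : 0 < ν1 := by rw [hν1]; linarith
  have hν2pos : 0 < ν2 := by rw [hν2]; positivity
  have hlt : ν1 < ν2 := by rw [hν1, hν2]; linarith
  have hsum : ν1 + ν2 = γ * β := by rw [hν1, hν2]; ring
  have hprod : ν1 * ν2 = ε * β := by rw [hν1, hν2]; nlinarith [hS2]
  have hν1ne : ν1 ≠ 0 := ne_of_gt hν1pos
  have hν2ne : ν2 ≠ 0 := ne_of_gt hν2pos
  have hdenne : β / ν1 - β / ν2 ≠ 0 := by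
    have : 0 < β / ν1 - β / ν2 := by
      rw [sub_pos]
      exact div_lt_div_of_pos_left hβ hν1pos hlt
    exact ne_of_gt this
  refine ⟨ν1, hν1pos, ?_⟩
  intro y x hfm
  filter_upwards [hfm.2.2] with t ht hxt
  obtain ⟨y', x', hy', hx', hint, _⟩ := ht
  obtain ⟨hy'eq, hx'eq⟩ := hint hxt
  set A1 : ℝ → ℝ := fun s => (y s + (β / ν2) * x s) / (β / ν1 - β / ν2) with hA1def
  set A2 : ℝ → ℝ := fun s => -(x s) - A1 s with hA2def
  have hsn : ∀ s, starNorm β γ ε (y s, x s) = Real.sqrt (A1 s ^ 2 + A2 s ^ 2) := by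
    intro s; rfl
  have hfun : (fun s => starNorm β γ ε (y s, x s))
      = fun s => Real.sqrt (A1 s ^ 2 + A2 s ^ 2) := funext hsn
  -- the key coordinate ODEs
  have hA1t : (ν2 - ν1) * A1 t = ε * y t + ν1 * x t := by
    rw [hA1def]
    simp only
    rw [mul_div_assoc', div_eq_iff hdenne]
    field_simp
    linear_combination (ν2 - ν1) * (y t) * hprod
  have hA1' : HasDerivAt A1 (-ν1 * A1 t) t := by
    have h := (hy'.add (hx'.const_mul (β / ν2))).div_const (β / ν1 - β / ν2)
    have hnum : y' + (β / ν2) * x' = -ν1 * (y t + (β / ν2) * x t) := by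
      rw [hy'eq, hx'eq]
      field_simp
      linear_combination (β * x t) * hsum + (y t) * hprod
    rw [hnum] at h
    refine (h : HasDerivAt A1 _ t).congr_deriv ?_
    rw [hA1def]
    simp only
    ring
  have hA2' : HasDerivAt A2 (-ν2 * A2 t) t := by
    have h := (hx'.neg).sub hA1'
    have heq : -x' - (-ν1 * A1 t) = -ν2 * A2 t := by
      rw [hx'eq, hA2def]
      simp only
      linear_combination (-1 : ℝ) * hA1t - (x t) * hsum
    rw [heq] at h
    exact h
  have hg : HasDerivAt (fun s => A1 s ^ 2 + A2 s ^ 2)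
      (2 * A1 t * (-ν1 * A1 t) + 2 * A2 t * (-ν2 * A2 t)) t := by
    have h1 : HasDerivAt (fun s => A1 s ^ 2) (2 * A1 t * (-ν1 * A1 t)) t := by
      have := hA1'.pow 2
      norm_num at this
      refine (this : HasDerivAt (fun s => A1 s ^ 2) _ t).congr_deriv ?_
      ring
    have h2 : HasDerivAt (fun s => A2 s ^ 2) (2 * A2 t * (-ν2 * A2 t)) t := by
      have := hA2'.pow 2
      norm_num at this
      refine (this : HasDerivAt (fun s => A2 s ^ 2) _ t).congr_deriv ?_
      ring
    exact h1.add h2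
  by_cases hz : A1 t ^ 2 + A2 t ^ 2 = 0
  · -- both coordinates vanish: the norm has derivative 0
    have h10 : A1 t = 0 := by
      have h : A1 t ^ 2 = 0 := by linarith [sq_nonneg (A1 t), sq_nonneg (A2 t)]
      exact pow_eq_zero_iff (n := 2) (by norm_num) |>.1 h
    have h20 : A2 t = 0 := by
      have h : A2 t ^ 2 = 0 := by linarith [sq_nonneg (A1 t), sq_nonneg (A2 t)]
      exact pow_eq_zero_iff (n := 2) (by norm_num) |>.1 h
    refine ⟨0, ?_, ?_⟩
    · rw [hfun, hasDerivAt_iff_tendsto_slope]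
      have hs1 : Tendsto (slope A1 t) (𝓝[≠] t) (𝓝 0) := by
        have h := hasDerivAt_iff_tendsto_slope.1 hA1'
        rwa [h10, mul_zero] at h
      have hs2 : Tendsto (slope A2 t) (𝓝[≠] t) (𝓝 0) := by
        have h := hasDerivAt_iff_tendsto_slope.1 hA2'
        rwa [h20, mul_zero] at h
      have hlim : Tendsto (fun s => |slope A1 t s| + |slope A2 t s|) (𝓝[≠] t) (𝓝 0) := by
        have h := hs1.abs.add hs2.abs
        simpa using h
      apply squeeze_zero_norm _ hlim
      intro s
      rcases eq_or_ne s t with rfl | hst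
      · simp [slope_def_field]
      · have hstne : s - t ≠ 0 := sub_ne_zero.2 hst
        simp only [slope_def_field]
        have hft : Real.sqrt (A1 t ^ 2 + A2 t ^ 2) = 0 := by
          rw [h10, h20]; simp
        rw [hft, h10, h20, sub_zero, sub_zero, sub_zero]
        rw [Real.norm_eq_abs, abs_div (Real.sqrt (A1 s ^ 2 + A2 s ^ 2)) (s - t),
          abs_div (A1 s) (s - t), abs_div (A2 s) (s - t), ← add_div]
        have hle : |Real.sqrt (A1 s ^ 2 + A2 s ^ 2)| ≤ |A1 s| + |A2 s| := by
          rw [abs_of_nonneg (Real.sqrt_nonneg _)]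
          have h := Real.sqrt_le_sqrt (show A1 s ^ 2 + A2 s ^ 2 ≤ (|A1 s| + |A2 s|)^2 by
            nlinarith [sq_abs (A1 s), sq_abs (A2 s),
              mul_nonneg (abs_nonneg (A1 s)) (abs_nonneg (A2 s))])
          rwa [Real.sqrt_sq (by positivity)] at h
        exact (div_le_div_iff_of_pos_right (abs_pos.2 hstne)).2 hle
    · have h0 : starNorm β γ ε (y t, x t) = 0 := by
        rw [hsn, h10, h20]; simp
      rw [h0]; simp
  · -- norm is positive: use smoothness of sqrt
    have hgt : 0 < A1 t ^ 2 + A2 t ^ 2 := lt_of_le_of_ne (by positivity) (Ne.symm hz)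
    set s0 : ℝ := Real.sqrt (A1 t ^ 2 + A2 t ^ 2) with hs0def
    have hs0pos : 0 < s0 := Real.sqrt_pos.2 hgt
    have hs0sq : s0 ^ 2 = A1 t ^ 2 + A2 t ^ 2 := Real.sq_sqrt hgt.le
    have hder : HasDerivAt (fun u => Real.sqrt (A1 u ^ 2 + A2 u ^ 2))
        (1 / (2 * s0) * (2 * A1 t * (-ν1 * A1 t) + 2 * A2 t * (-ν2 * A2 t))) t :=
      (Real.hasDerivAt_sqrt (ne_of_gt hgt)).comp t hg
    refine ⟨_, by rw [hfun]; exact hder, ?_⟩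
    have hstar : starNorm β γ ε (y t, x t) = s0 := hsn t
    rw [hstar]
    have h2s : (0:ℝ) < 2 * s0 := by linarith
    have hD2 : 2 * A1 t * (-ν1 * A1 t) + 2 * A2 t * (-ν2 * A2 t) ≤ -ν1 * s0 * (2 * s0) :=
      sq_norm_decay (A1 t) (A2 t) ν1 ν2 s0 hs0pos hs0sq hlt.le
    have hd : 1 / (2 * s0) * (2 * A1 t * (-ν1 * A1 t) + 2 * A2 t * (-ν2 * A2 t))
        = (2 * A1 t * (-ν1 * A1 t) + 2 * A2 t * (-ν2 * A2 t)) / (2 * s0) := by ring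
    rw [hd, div_le_iff₀ h2s]
    exact hD2
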